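/- Let V be a complex vector space, (T_p)_{p≥0} a family of pairwise commuting linear endomorphisms of V, v ∈ V, and K ∈ ℤ≥0. For r,s ∈ ℤ≥0 define X(r,s) = Σ_{(b_p)∈S(r,s)} ∏_p T_p^{b_p}/b_p! and, for k ≥ 1, _kX(r,s) the analogous sum over those (b_p) ∈ S(r,s) with b_p = 0 for all p < k. Then X(r,s)v = 0 for all r,s,k ≥ 1 with s + r ≥ 1 + kr + K if and only if _kX(r,s)v = 0 for all r,s,k ≥ 1 with s + r ≥ 1 + kr + K. -/

import Mathlib

noncomputable section

/-- The set of finitely supported sequences `(b_p)_{p≥0}` of non-negative integers with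
`Σ_p b_p = r`, `Σ_p p·b_p = s` and `b_p = 0` for all `p < k` (for `k = 0` this is `S(r,s)`). -/
def kSset (k r s : ℕ) : Set (ℕ →₀ ℕ) :=
  {b | (b.sum fun _ m => m) = r ∧ (b.sum fun p m => p * m) = s ∧ ∀ p, p < k → b p = 0}

/-- The operator `Π_p T_p^{b_p}/b_p!` (the product taken in increasing order of `p`; for
`(b_p) ∈ S(r,s)` one has `b_p = 0` for `p > s`, so the product below over `p = 0, …, s`
agrees with the full product). -/
def opTerm {V : Type} [AddCommGroup V] [Module ℂ V]
    (T : ℕ → Module.End ℂ V) (s : ℕ) (b : ℕ →₀ ℕ) : Module.End ℂ V :=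
  ((List.range (s + 1)).map fun p => ((b p).factorial : ℂ)⁻¹ • T p ^ b p).prod

/-- The operator `_kX(r,s) = Σ_{(b_p) ∈ S(r,s), b_p = 0 for p < k} Π_p T_p^{b_p}/b_p!`;
for `k = 0` this is `X(r,s)`. -/
def opX {V : Type} [AddCommGroup V] [Module ℂ V]
    (T : ℕ → Module.End ℂ V) (k r s : ℕ) : Module.End ℂ V :=
  ∑ᶠ b ∈ kSset k r s, opTerm T s b

-- value bounds
lemma kSset.val_le {k r s : ℕ} {b : ℕ →₀ ℕ} (hb : b ∈ kSset k r s) (p : ℕ) : b p ≤ r := by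
  rcases eq_or_ne (b p) 0 with h | h
  · omega
  · have hp : p ∈ b.support := Finsupp.mem_support_iff.2 h
    calc b p ≤ ∑ q ∈ b.support, b q :=
          Finset.single_le_sum (fun _ _ => Nat.zero_le _) hp
      _ = r := hb.1

lemma kSset.mul_le {k r s : ℕ} {b : ℕ →₀ ℕ} (hb : b ∈ kSset k r s) (p : ℕ) : p * b p ≤ s := by
  rcases eq_or_ne (b p) 0 with h | h
  · simp [h]
  · have hp : p ∈ b.support := Finsupp.mem_support_iff.2 h
    calc p * b p ≤ ∑ q ∈ b.support, q * b q :=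
          Finset.single_le_sum (f := fun q => q * b q) (fun _ _ => Nat.zero_le _) hp
      _ = s := hb.2.1

lemma kSset.eq_zero_of_gt {k r s : ℕ} {b : ℕ →₀ ℕ} (hb : b ∈ kSset k r s) {p : ℕ}
    (hp : s < p) : b p = 0 := by
  have h1 := kSset.mul_le hb p
  by_contra h
  have : 1 ≤ b p := Nat.one_le_iff_ne_zero.2 h
  nlinarith

lemma kSset.finite (k r s : ℕ) : (kSset k r s).Finite := by
  have : kSset k r s ⊆
      (fun f : Fin (s+1) → Fin (r+1) =>
        Finsupp.onFinset (Finset.range (s+1))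
          (fun p => if h : p < s + 1 then (f ⟨p, h⟩ : ℕ) else 0)
          (by intro p hp; simp only [Finset.mem_range]; by_contra hc; simp [hc] at hp)) ''
      Set.univ := by
    intro b hb
    refine ⟨fun i => ⟨b i, Nat.lt_succ_of_le (kSset.val_le hb i)⟩, trivial, ?_⟩
    ext p
    rcases lt_or_ge p (s+1) with h | h
    · simp [Finsupp.onFinset_apply, h]; intro; omega
    · simp only [Finsupp.onFinset_apply]
      rw [dif_neg (by omega)]
      exact (kSset.eq_zero_of_gt hb (by omega)).symm
  exact Set.Finite.subset (Set.toFinite _) this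

lemma opX_eq_sum {V : Type} [AddCommGroup V] [Module ℂ V]
    (T : ℕ → Module.End ℂ V) (k r s : ℕ) :
    opX T k r s = ∑ b ∈ (kSset.finite k r s).toFinset, opTerm T s b := by
  rw [opX, ← finsum_mem_coe_finset, Set.Finite.coe_toFinset]

lemma opX_zero_left {V : Type} [AddCommGroup V] [Module ℂ V]
    (T : ℕ → Module.End ℂ V) (k s : ℕ) (hs : 1 ≤ s) : opX T k 0 s = 0 := by
  have h : kSset k 0 s = ∅ := by
    ext b
    simp only [Set.mem_empty_iff_false, iff_false]
    intro hb
    have hb0 : b = 0 := by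
      ext p
      exact Nat.le_zero.1 (kSset.val_le hb p)
    rw [hb0] at hb
    have := hb.2.1
    rw [Finsupp.sum_zero_index] at this
    omega
  rw [opX, h, finsum_mem_empty]

-- list product helpers
lemma prod_range_trim {M : Type*} [Monoid M] (g : ℕ → M) {a n : ℕ} (h : a ≤ n)
    (h1 : ∀ p, a ≤ p → p < n → g p = 1) :
    ((List.range n).map g).prod = ((List.range a).map g).prod := by
  have hsplit : List.range a ++ List.range' a (n - a) = List.range n := by
    rw [List.range_eq_range', List.range_eq_range']
    have := @List.range'_append 0 a (n - a) 1
    rw [Nat.add_sub_cancel' h] at this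
    simpa using this
  rw [← hsplit, List.map_append, List.prod_append]
  have : ((List.range' a (n - a)).map g).prod = 1 := by
    apply List.prod_eq_one
    intro x hx
    simp only [List.mem_map] at hx
    obtain ⟨p, hp, rfl⟩ := hx
    rw [List.mem_range'_1] at hp
    exact h1 p hp.1 (by omega)
  rw [this, mul_one]

lemma prod_range_drop {M : Type*} [Monoid M] (g : ℕ → M) {k n : ℕ} (h : k ≤ n)
    (h1 : ∀ p, p < k → g p = 1) :
    ((List.range n).map g).prod = ((List.range' k (n - k)).map g).prod := by
  have hsplit : List.range k ++ List.range' k (n - k) = List.range n := by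
    rw [List.range_eq_range', List.range_eq_range']
    have := @List.range'_append 0 k (n - k) 1
    rw [Nat.add_sub_cancel' h] at this
    simpa using this
  rw [← hsplit, List.map_append, List.prod_append]
  have : ((List.range k).map g).prod = 1 := by
    apply List.prod_eq_one
    intro x hx
    simp only [List.mem_map, List.mem_range] at hx
    obtain ⟨p, hp, rfl⟩ := hx
    exact h1 p hp
  rw [this, one_mul]

-- padding lemma
lemma opTerm_pad {V : Type} [AddCommGroup V] [Module ℂ V]
    (T : ℕ → Module.End ℂ V) {s s' : ℕ} (b : ℕ →₀ ℕ) (h : s' ≤ s)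
    (hb : ∀ p, s' < p → b p = 0) : opTerm T s b = opTerm T s' b := by
  unfold opTerm
  apply prod_range_trim _ (by omega)
  intro p hp _
  rw [hb p (by omega)]
  simp

-- key factorization
lemma opTerm_add_single {V : Type} [AddCommGroup V] [Module ℂ V]
    (T : ℕ → Module.End ℂ V) {s k : ℕ} (j : ℕ) (b : ℕ →₀ ℕ) (hk : k ≤ s)
    (hb : ∀ p, p ≤ k → b p = 0) :
    opTerm T s (b + Finsupp.single k j) =
      ((j.factorial : ℂ)⁻¹ • T k ^ j) * opTerm T s b := by
  unfold opTerm
  set c := b + Finsupp.single k j with hc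
  have hcp : ∀ p, p ≠ k → c p = b p := by
    intro p hp
    simp [hc, Finsupp.single_apply, hp, Ne.symm hp]
  have hck : c k = j := by
    simp [hc, Finsupp.single_apply, hb k le_rfl]
  have h1 : ((List.range (s+1)).map fun p => ((c p).factorial : ℂ)⁻¹ • T p ^ c p).prod
      = ((List.range' k (s + 1 - k)).map fun p => ((c p).factorial : ℂ)⁻¹ • T p ^ c p).prod := by
    apply prod_range_drop _ (by omega)
    intro p hp
    rw [hcp p (by omega), hb p (by omega)]
    simp
  have h2 : ((List.range (s+1)).map fun p => ((b p).factorial : ℂ)⁻¹ • T p ^ b p).prod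
      = ((List.range' (k+1) (s + 1 - (k+1))).map fun p => ((b p).factorial : ℂ)⁻¹ • T p ^ b p).prod := by
    apply prod_range_drop _ (by omega)
    intro p hp
    rw [hb p (by omega)]
    simp
  rw [h1, h2]
  have hs1 : s + 1 - k = (s - k) + 1 := by omega
  have hs2 : s + 1 - (k + 1) = s - k := by omega
  rw [hs1, hs2, List.range'_succ, List.map_cons, List.prod_cons, hck]
  congr 1
  apply congrArg
  apply List.map_congr_left
  intro p hp
  rw [List.mem_range'_1] at hp
  rw [hcp p (by omega)]

lemma mem_kSset_add_single {k r s j : ℕ} {b : ℕ →₀ ℕ} (hj : j ≤ r) (hjk : j * k ≤ s)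
    (hb : b ∈ kSset (k+1) (r-j) (s-j*k)) : b + Finsupp.single k j ∈ kSset k r s := by
  obtain ⟨h1, h2, h3⟩ := hb
  refine ⟨?_, ?_, ?_⟩
  · rw [Finsupp.sum_add_index' (fun _ => rfl) (fun _ m n => rfl)]
    rw [Finsupp.sum_single_index rfl, h1]
    omega
  · rw [Finsupp.sum_add_index' (fun a => by simp) (fun a m n => by ring)]
    rw [Finsupp.sum_single_index (by simp), h2]
    rw [mul_comm k j]
    omega
  · intro p hp
    simp only [Finsupp.add_apply, Finsupp.single_apply, if_neg (by omega : ¬ k = p)]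
    rw [h3 p (by omega), Nat.add_zero]

lemma mem_kSset_erase {k r s : ℕ} {b : ℕ →₀ ℕ} (hb : b ∈ kSset k r s) :
    b.erase k ∈ kSset (k+1) (r - b k) (s - (b k) * k) := by
  obtain ⟨h1, h2, h3⟩ := hb
  have hsplit := Finsupp.single_add_erase k b
  have hv : (Finsupp.erase k b).sum (fun _ m => m) + b k = r := by
    have := congrArg (fun f : ℕ →₀ ℕ => f.sum fun _ m => m) hsplit
    rw [Finsupp.sum_add_index' (fun _ => rfl) (fun _ m n => rfl),
      Finsupp.sum_single_index rfl] at this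
    omega
  have hw : (Finsupp.erase k b).sum (fun p m => p * m) + k * b k = s := by
    have := congrArg (fun f : ℕ →₀ ℕ => f.sum fun p m => p * m) hsplit
    rw [Finsupp.sum_add_index' (fun a => by simp) (fun a m n => by ring),
      Finsupp.sum_single_index (by simp)] at this
    omega
  refine ⟨by omega, by rw [mul_comm (b k) k]; omega, ?_⟩
  intro p hp
  rcases eq_or_ne p k with rfl | hne
  · exact Finsupp.erase_same
  · rw [Finsupp.erase_ne hne]
    exact h3 p (by omega)

lemma decomp {V : Type} [AddCommGroup V] [Module ℂ V]
    (T : ℕ → Module.End ℂ V) (k r s : ℕ) (hr : 1 ≤ r) (hs : r * k ≤ s) :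
    opX T k r s = ∑ j ∈ Finset.range (r+1),
      ((j.factorial : ℂ)⁻¹ • T k ^ j) * opX T (k+1) (r-j) (s - j*k) := by
  have hk : k ≤ s := le_trans (le_trans (by omega) (Nat.mul_le_mul_right k hr)) hs
  have hjk : ∀ j, j ≤ r → j * k ≤ s := fun j hj =>
    le_trans (Nat.mul_le_mul_right k hj) hs
  simp only [opX_eq_sum, Finset.mul_sum]
  have hss : (∑ x ∈ (Finset.range (r+1)).sigma
          (fun j => (kSset.finite (k+1) (r-j) (s-j*k)).toFinset),
        (x.1.factorial : ℂ)⁻¹ • T k ^ x.1 * opTerm T (s - x.1*k) x.2)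
      = ∑ j ∈ Finset.range (r+1), ∑ b ∈ (kSset.finite (k+1) (r-j) (s-j*k)).toFinset,
        (j.factorial : ℂ)⁻¹ • T k ^ j * opTerm T (s - j*k) b :=
    Finset.sum_sigma _ _ _
  rw [← hss]
  apply Finset.sum_nbij' (i := fun b => (⟨b k, b.erase k⟩ : Σ _ : ℕ, ℕ →₀ ℕ))
    (j := fun x => x.2 + Finsupp.single k x.1)
  · intro b hb
    simp only [Set.Finite.mem_toFinset] at hb
    simp only [Finset.mem_sigma, Finset.mem_range, Set.Finite.mem_toFinset]
    exact ⟨Nat.lt_succ_of_le (kSset.val_le hb k), mem_kSset_erase hb⟩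
  · rintro ⟨j, b⟩ hx
    simp only [Finset.mem_sigma, Finset.mem_range, Set.Finite.mem_toFinset] at hx ⊢
    exact mem_kSset_add_single (by omega) (hjk j (by omega)) hx.2
  · intro b hb
    simp only
    rw [Finsupp.erase_add_single]
  · rintro ⟨j, b⟩ hx
    simp only [Finset.mem_sigma, Finset.mem_range, Set.Finite.mem_toFinset] at hx
    have hbk : b k = 0 := hx.2.2.2 k (by omega)
    have h1 : (b + Finsupp.single k j) k = j := by
      simp [Finsupp.add_apply, Finsupp.single_apply, hbk]
    have h2 : (b + Finsupp.single k j).erase k = b := by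
      ext p
      rcases eq_or_ne p k with rfl | hne
      · rw [Finsupp.erase_same, hbk]
      · rw [Finsupp.erase_ne hne]
        simp [Finsupp.add_apply, Finsupp.single_apply, Ne.symm hne]
    simp only [h1, h2]
  · intro b hb
    simp only [Set.Finite.mem_toFinset] at hb
    have hbk := kSset.val_le hb k
    have herase := mem_kSset_erase hb
    have hb0 : ∀ p, p ≤ k → (b.erase k) p = 0 := fun p hp => herase.2.2 p (by omega)
    show opTerm T s b =
      (((b k).factorial : ℂ)⁻¹ • T k ^ (b k)) * opTerm T (s - b k * k) (b.erase k)
    have h1 : opTerm T (s - b k * k) (b.erase k) = opTerm T s (b.erase k) := by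
      apply (opTerm_pad T _ (by omega) ?_).symm
      intro p hp
      exact kSset.eq_zero_of_gt herase hp
    rw [h1, ← opTerm_add_single T (b k) (b.erase k) hk hb0, Finsupp.erase_add_single]

/-- Proposition `max`.  Let `V` be a complex vector space, `(T_p)_{p≥0}` a
family of pairwise commuting endomorphisms of `V`, `v ∈ V` and `K ∈ ℤ≥0`.  Then
`X(r,s)v = 0` for all `r, s, k ≥ 1` with `s + r ≥ 1 + kr + K` if and only if
`_kX(r,s)v = 0` for all `r, s, k ≥ 1` with `s + r ≥ 1 + kr + K`. -/
theorem opX_zero_iff_high_opX_zero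
    {V : Type} [AddCommGroup V] [Module ℂ V]
    (T : ℕ → Module.End ℂ V) (hT : ∀ p q, Commute (T p) (T q))
    (v : V) (K : ℕ) :
    (∀ r s k : ℕ, 1 ≤ r → 1 ≤ s → 1 ≤ k → 1 + k * r + K ≤ s + r → opX T 0 r s v = 0) ↔
    (∀ r s k : ℕ, 1 ≤ r → 1 ≤ s → 1 ≤ k → 1 + k * r + K ≤ s + r → opX T k r s v = 0) := by
  constructor
  · intro H
    have H0 : ∀ r s : ℕ, 1 ≤ r → 1 ≤ s → 1 + 1 * r + K ≤ s + r → opX T 0 r s v = 0 :=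
      fun r s hr hs hb => H r s 1 hr hs le_rfl hb
    have step : ∀ k : ℕ,
        (∀ r s : ℕ, 1 ≤ r → 1 ≤ s → 1 + (k+1) * r + K ≤ s + r → opX T k r s v = 0) →
        ∀ r s : ℕ, 1 ≤ r → 1 ≤ s → 1 + (k+1) * r + K ≤ s + r → opX T (k+1) r s v = 0 := by
      intro k prev r
      induction r using Nat.strong_induction_on with
      | _ r ih =>
        intro s hr hs hbound
        have e1 : (k+1) * r = k * r + r := by ring
        have hs2 : r * k ≤ s := by
          have e2 : r * k = k * r := by ring
          linarith
        have hdec := decomp T k r s hr hs2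
        have happ : opX T k r s v = ∑ j ∈ Finset.range (r+1),
            (((j.factorial : ℂ)⁻¹ • T k ^ j) * opX T (k+1) (r-j) (s - j*k)) v := by
          rw [hdec]; exact LinearMap.sum_apply _ _ v
        have hz : ∀ j ∈ Finset.range (r+1), j ≠ 0 →
            (((j.factorial : ℂ)⁻¹ • T k ^ j) * opX T (k+1) (r-j) (s - j*k)) v = 0 := by
          intro j hj hj0
          rw [Finset.mem_range] at hj
          have hjr : j ≤ r := by omega
          have hjks : j * k ≤ s := le_trans (Nat.mul_le_mul_right k hjr) hs2
          have hXv : opX T (k+1) (r-j) (s - j*k) v = 0 := by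
            rcases eq_or_lt_of_le hjr with rfl | hlt
            · have h1 : 1 ≤ s - j * k := by
                apply Nat.le_sub_of_add_le
                have : j * k = k * j := by ring
                linarith
              rw [Nat.sub_self, opX_zero_left T (k+1) _ h1, LinearMap.zero_apply]
            · obtain ⟨d, hd⟩ := Nat.exists_eq_add_of_le hjr
              obtain ⟨m, hm⟩ := Nat.exists_eq_add_of_le hjks
              have hrj : r - j = d := by omega
              have hsj : s - j * k = m := by rw [hm, Nat.add_sub_cancel_left]
              have e3 : (k+1) * (j + d) = k*j + k*d + j + d := by ring
              have e4 : (k+1) * d = k*d + d := by ring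
              have e5 : j * k = k * j := by ring
              rw [hd, hm, e3, e5] at hbound
              have hm1 : 1 ≤ m := by
                generalize k * j = A at hbound
                generalize k * d = B at hbound
                omega
              have hb2 : 1 + (k+1) * d + K ≤ m + d := by
                rw [e4]
                generalize k * j = A at hbound
                generalize k * d = B at hbound ⊢
                omega
              rw [hrj, hsj]
              exact ih d (by omega) m (by omega) hm1 hb2
          rw [Module.End.mul_apply, hXv, map_zero]
        have hsum : (∑ j ∈ Finset.range (r+1),
            (((j.factorial : ℂ)⁻¹ • T k ^ j) * opX T (k+1) (r-j) (s - j*k)) v)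
            = ((((0:ℕ).factorial : ℂ)⁻¹ • T k ^ (0:ℕ)) * opX T (k+1) (r-0) (s - 0*k)) v :=
          Finset.sum_eq_single_of_mem 0 (Finset.mem_range.2 (by omega)) hz
        have hprev : opX T k r s v = 0 := prev r s hr hs hbound
        have hfin : ((((0:ℕ).factorial : ℂ)⁻¹ • T k ^ (0:ℕ)) * opX T (k+1) (r-0) (s - 0*k)) v
            = opX T (k+1) r s v := by
          simp [Nat.factorial]
        rw [hprev, hsum, hfin] at happ
        exact happ.symm
    have key : ∀ k r s : ℕ, 1 ≤ r → 1 ≤ s → 1 + (k+1) * r + K ≤ s + r →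
        opX T (k+1) r s v = 0 := by
      intro k
      induction k with
      | zero => exact step 0 H0
      | succ k ihk =>
        refine step (k+1) (fun r s hr hs hb => ihk r s hr hs ?_)
        have h1 : (k+1) * r ≤ (k+2) * r := Nat.mul_le_mul_right r (by omega)
        linarith
    intro r s k hr hs hk hbound
    obtain ⟨k', rfl⟩ : ∃ k', k = k' + 1 := ⟨k - 1, by omega⟩
    exact key k' r s hr hs hbound
  · intro H r s k hr hs hk hbound
    have hs1 : 1 + K ≤ s := by
      have h1 : 1 * r ≤ k * r := Nat.mul_le_mul_right r hk
      have h2 : 1 * r = r := by ring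
      linarith
    have hdec := decomp T 0 r s hr (by simp)
    rw [hdec, LinearMap.sum_apply]
    apply Finset.sum_eq_zero
    intro j hj
    rw [Finset.mem_range] at hj
    rw [Module.End.mul_apply]
    have hXv : opX T 1 (r-j) (s - j*0) v = 0 := by
      rw [Nat.mul_zero, Nat.sub_zero]
      rcases eq_or_lt_of_le (show j ≤ r by omega) with rfl | hlt
      · rw [Nat.sub_self, opX_zero_left T 1 s hs, LinearMap.zero_apply]
      · exact H (r-j) s 1 (by omega) hs le_rfl (by omega)
    rw [hXv, map_zero]

end
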